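/- Let Y and C be independent real random variables with continuous CDFs, let Y* = min(Y,C) and δ = 1{Y ≤ C}. Define 𝓕(Y*,δ) = (1−δ)/2 + (1+δ)F(Y*)/2, where F is the CDF of Y. Then E[F(Y) | Y*, δ] = 𝓕(Y*, δ) almost surely. -/

import Mathlib

open MeasureTheory ProbabilityTheory Set

lemma aux_noAtoms (ν : Measure ℝ) [IsProbabilityMeasure ν] (F : ℝ → ℝ)
    (hF : ∀ y, F y = (ν (Iic y)).toReal) (hFc : Continuous F) (x : ℝ) : ν {x} = 0 := by
  have hfin : ∀ y, ν (Iic y) ≠ ⊤ := fun y => measure_ne_top ν _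
  have hofReal : ∀ y, ν (Iic y) = ENNReal.ofReal (F y) := by
    intro y; rw [hF y, ENNReal.ofReal_toReal (hfin y)]
  have hmono : Monotone (fun n : ℕ => Iic (x - 1/(n+1))) := by
    intro a b hab
    have h1 : (1:ℝ)/(b+1) ≤ 1/(a+1) := by
      apply one_div_le_one_div_of_le (by positivity)
      have : (a:ℝ) ≤ b := by exact_mod_cast hab
      linarith
    exact Iic_subset_Iic.2 (by linarith)
  have hUnion : (⋃ n : ℕ, Iic (x - 1/(n+1))) = Iio x := by
    ext y; simp only [mem_iUnion, mem_Iic, mem_Iio]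
    constructor
    · rintro ⟨n, hn⟩
      have : (0:ℝ) < 1/(n+1) := by positivity
      linarith
    · intro hy
      obtain ⟨n, hn⟩ := exists_nat_one_div_lt (show (0:ℝ) < x - y by linarith)
      exact ⟨n, by linarith⟩
  have h1 : Filter.Tendsto (fun n : ℕ => ν (Iic (x - 1/(n+1)))) Filter.atTop (nhds (ν (Iio x))) := by
    rw [← hUnion]
    exact tendsto_measure_iUnion_atTop hmono
  have h2 : Filter.Tendsto (fun n : ℕ => ν (Iic (x - 1/(n+1)))) Filter.atTop (nhds (ν (Iic x))) := by
    simp only [hofReal]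
    refine (ENNReal.continuous_ofReal.tendsto _).comp ?_
    refine (hFc.tendsto x).comp ?_
    have : Filter.Tendsto (fun n : ℕ => x - 1/((n:ℝ)+1)) Filter.atTop (nhds (x - 0)) :=
      tendsto_const_nhds.sub tendsto_one_div_add_atTop_nhds_zero_nat
    simpa using this
  have heq : ν (Iio x) = ν (Iic x) := tendsto_nhds_unique h1 h2
  have : ν (Iic x) = ν (Iio x) + ν {x} := by
    rw [← measure_union (by simp) (measurableSet_singleton x), Iio_union_right]
  rw [heq] at this
  have h3 : ν (Iic x) + 0 = ν (Iic x) + ν {x} := by rw [add_zero]; exact this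
  exact (ENNReal.add_right_inj (measure_ne_top ν (Iic x))).mp h3 |>.symm


lemma aux_half (ν : Measure ℝ) [IsProbabilityMeasure ν] (F : ℝ → ℝ)
    (hF : ∀ y, F y = (ν (Iic y)).toReal) (hatom : ∀ x, ν {x} = 0) (c : ℝ) :
    (2:ENNReal) * ∫⁻ y in Ioi c, ν (Iic y) ∂ν = ENNReal.ofReal (1 - F c ^ 2) := by
  set A : Set (ℝ × ℝ) := {p | p.2 ≤ p.1 ∧ c < p.1} with hA_def
  set B : Set (ℝ × ℝ) := {p | p.1 ≤ p.2 ∧ c < p.2} with hB_def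
  have hA : MeasurableSet A :=
    (measurableSet_le measurable_snd measurable_fst).inter
      (measurableSet_lt measurable_const measurable_fst)
  have hB : MeasurableSet B :=
    (measurableSet_le measurable_fst measurable_snd).inter
      (measurableSet_lt measurable_const measurable_snd)
  -- (ν.prod ν) A equals the set lintegral
  have hAval : (ν.prod ν) A = ∫⁻ y in Ioi c, ν (Iic y) ∂ν := by
    rw [Measure.prod_apply hA, ← lintegral_indicator measurableSet_Ioi (fun y => ν (Iic y))]
    congr 1
    ext y
    by_cases hy : c < y
    · have : Prod.mk y ⁻¹' A = Iic y := by
        ext z; simp [hA_def, hy]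
      simp [this, indicator_of_mem (mem_Ioi.2 hy)]
    · have : Prod.mk y ⁻¹' A = ∅ := by
        ext z; simp [hA_def, hy]
      simp [this, indicator_of_notMem (fun h => hy (mem_Ioi.1 h))]
  have hBA : (ν.prod ν) B = (ν.prod ν) A := by
    have : B = Prod.swap ⁻¹' A := by
      ext p; simp [hA_def, hB_def, Prod.swap, and_comm]
    rw [this, ← Measure.map_apply measurable_swap hA, Measure.prod_swap]
  -- union
  have hUnion : A ∪ B = (Iic c ×ˢ Iic c)ᶜ := by
    ext ⟨y, z⟩
    simp only [mem_union, mem_compl_iff, mem_prod, mem_Iic, hA_def, hB_def, mem_setOf_eq,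
      not_and_or, not_le]
    constructor
    · rintro (⟨_, h⟩ | ⟨_, h⟩); exacts [Or.inl h, Or.inr h]
    · rintro (h | h)
      · rcases le_total z y with hz | hz
        · exact Or.inl ⟨hz, h⟩
        · exact Or.inr ⟨hz, lt_of_lt_of_le h hz⟩
      · rcases le_total y z with hz | hz
        · exact Or.inr ⟨hz, h⟩
        · exact Or.inl ⟨hz, lt_of_lt_of_le h hz⟩
  have hdiag : (ν.prod ν) {p : ℝ × ℝ | p.1 = p.2} = 0 := by
    rw [Measure.prod_apply (measurableSet_eq_fun measurable_fst measurable_snd)]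
    have : ∀ y : ℝ, ν (Prod.mk y ⁻¹' {p : ℝ × ℝ | p.1 = p.2}) = 0 := by
      intro y
      have : Prod.mk y ⁻¹' {p : ℝ × ℝ | p.1 = p.2} = {y} := by ext z; simp [eq_comm]
      rw [this]; exact hatom y
    simp [hatom]
  have hInter : (ν.prod ν) (A ∩ B) = 0 := by
    refine measure_mono_null (fun p hp => ?_) hdiag
    exact le_antisymm hp.2.1 hp.1.1
  have key : (ν.prod ν) (A ∪ B) + (ν.prod ν) (A ∩ B) = (ν.prod ν) A + (ν.prod ν) B :=
    measure_union_add_inter A hB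
  rw [hInter, add_zero, hBA, hUnion] at key
  have hcompl : (ν.prod ν) (Iic c ×ˢ Iic c)ᶜ = 1 - ν (Iic c) * ν (Iic c) := by
    rw [measure_compl ((measurableSet_Iic).prod measurableSet_Iic) (measure_ne_top _ _),
      Measure.prod_prod, measure_univ]
  rw [hcompl] at key
  have hFval : ν (Iic c) = ENNReal.ofReal (F c) := by
    rw [hF c, ENNReal.ofReal_toReal (measure_ne_top _ _)]
  have hF01 : 0 ≤ F c ∧ F c ≤ 1 := by
    constructor
    · rw [hF c]; exact ENNReal.toReal_nonneg
    · rw [hF c]; exact ENNReal.toReal_le_of_le_ofReal one_pos.le (by simpa using prob_le_one)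
  rw [← hAval, two_mul, ← key, hFval, ← ENNReal.ofReal_mul hF01.1, ← sq,
    ← ENNReal.ofReal_one, ← ENNReal.ofReal_sub _ (by positivity)]



lemma aux_prod (ν κ : Measure ℝ) [IsProbabilityMeasure ν] [IsProbabilityMeasure κ] (F : ℝ → ℝ)
    (hFν : ∀ y, F y = (ν (Iic y)).toReal) (hatom : ∀ x, ν {x} = 0)
    (hFc : Continuous F) (hF0 : ∀ y, 0 ≤ F y) (hF1 : ∀ y, F y ≤ 1)
    (Bset : Set ℝ) (hBset : MeasurableSet Bset) :
    ∫⁻ p in {p : ℝ × ℝ | p.2 ∈ Bset ∧ p.2 < p.1}, ENNReal.ofReal (1/2 + F p.2 / 2) ∂(ν.prod κ)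
      = ∫⁻ p in {p : ℝ × ℝ | p.2 ∈ Bset ∧ p.2 < p.1},
          ENNReal.ofReal (F p.1) ∂(ν.prod κ) := by
  set S : Set (ℝ × ℝ) := {p | p.2 ∈ Bset ∧ p.2 < p.1} with hS_def
  have hS : MeasurableSet S :=
    (measurable_snd hBset).inter (measurableSet_lt measurable_snd measurable_fst)
  have hmR : Measurable (fun p : ℝ × ℝ => ENNReal.ofReal (1/2 + F p.2 / 2)) :=
    ENNReal.measurable_ofReal.comp (by fun_prop)
  have hmL : Measurable (fun p : ℝ × ℝ => ENNReal.ofReal (F p.1)) :=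
    ENNReal.measurable_ofReal.comp (hFc.measurable.comp measurable_fst)
  rw [← lintegral_indicator hS, ← lintegral_indicator hS,
    lintegral_prod_symm _ (hmR.indicator hS).aemeasurable,
    lintegral_prod_symm _ (hmL.indicator hS).aemeasurable]
  refine lintegral_congr fun c => ?_
  by_cases hc : c ∈ Bset
  · have hind : ∀ (h : ℝ × ℝ → ENNReal) (y : ℝ),
        S.indicator h (y, c) = (Ioi c).indicator (fun y => h (y, c)) y := by
      intro h y
      by_cases hy : c < y
      · rw [indicator_of_mem (by exact ⟨hc, hy⟩), indicator_of_mem (mem_Ioi.2 hy)]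
      · rw [indicator_of_notMem (by simp [hS_def, hy]),
          indicator_of_notMem (fun hmem => hy (mem_Ioi.1 hmem))]
    simp only [hind]
    rw [lintegral_indicator measurableSet_Ioi, lintegral_indicator measurableSet_Ioi]
    have hL : ∫⁻ y in Ioi c, ENNReal.ofReal (F y) ∂ν = ∫⁻ y in Ioi c, ν (Iic y) ∂ν := by
      refine lintegral_congr fun y => ?_
      rw [hFν y, ENNReal.ofReal_toReal (measure_ne_top _ _)]
    have hνIoi : ν (Ioi c) = ENNReal.ofReal (1 - F c) := by
      have : Ioi c = (Iic c)ᶜ := by ext x; simp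
      rw [this, measure_compl measurableSet_Iic (measure_ne_top _ _), measure_univ,
        ENNReal.ofReal_sub _ (hF0 c), ENNReal.ofReal_one,
        show ν (Iic c) = ENNReal.ofReal (F c) from by
          rw [hFν c, ENNReal.ofReal_toReal (measure_ne_top _ _)]]
    have hR : ∫⁻ _ in Ioi c, ENNReal.ofReal (1/2 + F c / 2) ∂ν
        = ENNReal.ofReal ((1/2 + F c / 2) * (1 - F c)) := by
      rw [setLIntegral_const, hνIoi, ← ENNReal.ofReal_mul (by linarith [hF0 c])]
    rw [hR, hL]
    refine ((ENNReal.mul_left_strictMono two_ne_zero (by norm_num)).injective ?_ : _)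
    rw [mul_comm _ (2:ENNReal), mul_comm _ (2:ENNReal)]
    rw [aux_half ν F hFν hatom c, ← ENNReal.ofReal_ofNat 2,
      ← ENNReal.ofReal_mul (by norm_num)]
    congr 1
    ring
  · have h0 : ∀ (h : ℝ × ℝ → ENNReal) (y : ℝ), S.indicator h (y, c) = 0 := by
      intro h y
      exact indicator_of_notMem (by simp [hS_def, hc]) h
    simp only [h0, lintegral_zero]



theorem condexp_imputation
    {Ω : Type*} [mΩ : MeasurableSpace Ω] (μ : Measure Ω) [IsProbabilityMeasure μ]
    (Y C : Ω → ℝ) (hY : Measurable Y) (hC : Measurable C)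
    (F G : ℝ → ℝ)
    (hF : ∀ y, F y = (μ {ω | Y ω ≤ y}).toReal)
    (hG : ∀ y, G y = (μ {ω | C ω ≤ y}).toReal)
    (hFc : Continuous F) (hGc : Continuous G)
    (hindep : IndepFun Y C μ) :
    μ[(fun ω => F (Y ω)) |
        MeasurableSpace.comap
          (fun ω => (min (Y ω) (C ω), if Y ω ≤ C ω then (1 : ℝ) else 0)) inferInstance]
      =ᵐ[μ] fun ω =>
        (1 - (if Y ω ≤ C ω then (1 : ℝ) else 0)) / 2
          + (1 + (if Y ω ≤ C ω then (1 : ℝ) else 0)) * F (min (Y ω) (C ω)) / 2 := by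
  -- basic notation
  set ν : Measure ℝ := μ.map Y with hν_def
  set κ : Measure ℝ := μ.map C with hκ_def
  haveI : IsProbabilityMeasure ν := Measure.isProbabilityMeasure_map hY.aemeasurable
  haveI : IsProbabilityMeasure κ := Measure.isProbabilityMeasure_map hC.aemeasurable
  have hFν : ∀ y, F y = (ν (Iic y)).toReal := by
    intro y
    rw [hF y, hν_def, Measure.map_apply hY measurableSet_Iic]
    rfl
  have hatom : ∀ x, ν {x} = 0 := aux_noAtoms ν F hFν hFc
  have hF0 : ∀ y, 0 ≤ F y := fun y => by rw [hFν y]; exact ENNReal.toReal_nonneg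
  have hF1 : ∀ y, F y ≤ 1 := fun y => by
    rw [hFν y]; exact ENNReal.toReal_le_of_le_ofReal one_pos.le (by simpa using prob_le_one)
  have hνIic : ∀ y, ν (Iic y) = ENNReal.ofReal (F y) := fun y => by
    rw [hFν y, ENNReal.ofReal_toReal (measure_ne_top _ _)]
  set pair : Ω → ℝ × ℝ := fun ω => (min (Y ω) (C ω), if Y ω ≤ C ω then (1 : ℝ) else 0)
    with hpair_def
  have hδmeas : Measurable (fun ω => if Y ω ≤ C ω then (1:ℝ) else 0) :=
    Measurable.ite (measurableSet_le hY hC) measurable_const measurable_const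
  have hpair : Measurable pair := (hY.min hC).prodMk hδmeas
  have hm : MeasurableSpace.comap pair inferInstance ≤ mΩ :=
    MeasurableSpace.comap_le_iff_le_map.2 (fun s hs => hpair hs)
  haveI : SigmaFinite (μ.trim hm) := by
    haveI : IsFiniteMeasure (μ.trim hm) := isFiniteMeasure_trim hm
    infer_instance
  -- integrability
  have hfmeas : Measurable (fun ω => F (Y ω)) := hFc.measurable.comp hY
  have hf_int : Integrable (fun ω => F (Y ω)) μ := by
    refine Integrable.mono' (integrable_const 1) hfmeas.aestronglyMeasurable ?_
    filter_upwards with ω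
    rw [Real.norm_eq_abs, abs_le]
    exact ⟨by linarith [hF0 (Y ω)], hF1 (Y ω)⟩
  set g : Ω → ℝ := fun ω =>
      (1 - (if Y ω ≤ C ω then (1 : ℝ) else 0)) / 2
        + (1 + (if Y ω ≤ C ω then (1 : ℝ) else 0)) * F (min (Y ω) (C ω)) / 2 with hg_def
  have hgmeas : Measurable g := by
    apply Measurable.add
    · exact ((measurable_const.sub hδmeas).div_const 2)
    · exact (((measurable_const.add hδmeas).mul (hFc.measurable.comp (hY.min hC))).div_const 2)
  have hg_int : Integrable g μ := by
    refine Integrable.mono' (integrable_const 2) hgmeas.aestronglyMeasurable ?_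
    filter_upwards with ω
    rw [Real.norm_eq_abs, abs_le, hg_def]
    have h0 := hF0 (min (Y ω) (C ω)); have h1 := hF1 (min (Y ω) (C ω))
    by_cases h : Y ω ≤ C ω <;> simp only [h, if_pos, if_neg, if_true, if_false] <;>
      constructor <;> nlinarith
  refine (ae_eq_condExp_of_forall_setIntegral_eq hm hf_int
    (fun s _ _ => hg_int.integrableOn) ?_ ?_).symm
  · -- the integral identity
    rintro s ⟨A, hA, rfl⟩ -
    set D : Set Ω := {ω | Y ω ≤ C ω} with hD_def
    have hD : MeasurableSet D := measurableSet_le hY hC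
    rw [← integral_inter_add_diff hD hg_int.integrableOn,
        ← integral_inter_add_diff hD hf_int.integrableOn]
    have hsA : MeasurableSet (pair ⁻¹' A) := hpair hA
    congr 1
    · refine setIntegral_congr_fun (hsA.inter hD) fun ω hω => ?_
      have h : Y ω ≤ C ω := hω.2
      simp only [hg_def, if_pos h, min_eq_left h]
      ring
    · set Bset : Set ℝ := {t | (t, (0:ℝ)) ∈ A} with hB_def
      have hBset : MeasurableSet Bset := (measurable_id.prodMk measurable_const) hA
      set S : Set (ℝ × ℝ) := {p | p.2 ∈ Bset ∧ p.2 < p.1} with hS_def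
      have hS : MeasurableSet S :=
        (measurable_snd hBset).inter (measurableSet_lt measurable_snd measurable_fst)
      have hsplit : pair ⁻¹' A \ D = (fun ω => (Y ω, C ω)) ⁻¹' S := by
        ext ω
        by_cases h : Y ω ≤ C ω
        · simp [hS_def, hD_def, h, not_lt.2 h]
        · have hlt : C ω < Y ω := not_le.1 h
          simp [hS_def, hD_def, hB_def, hpair_def, h, min_eq_right hlt.le, hlt]
      rw [hsplit]
      have hYC : Measurable (fun ω => (Y ω, C ω)) := hY.prodMk hC
      have hpre : MeasurableSet ((fun ω => (Y ω, C ω)) ⁻¹' S) := hYC hS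
      have hgon : ∀ ω ∈ (fun ω => (Y ω, C ω)) ⁻¹' S, g ω = 1/2 + F (C ω) / 2 := by
        intro ω hω
        have hlt : C ω < Y ω := hω.2
        have h : ¬ (Y ω ≤ C ω) := not_le.2 hlt
        simp only [hg_def, if_neg h, min_eq_right hlt.le]
        ring
      rw [setIntegral_congr_fun hpre hgon]
      have hmc : Measurable (fun ω => 1/2 + F (C ω)/2) := by fun_prop
      rw [integral_eq_lintegral_of_nonneg_ae
            (Filter.Eventually.of_forall fun ω => by
              simp only [Pi.zero_apply]; linarith [hF0 (C ω)])
            hmc.aestronglyMeasurable.restrict,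
          integral_eq_lintegral_of_nonneg_ae
            (Filter.Eventually.of_forall fun ω => by
              simp only [Pi.zero_apply]; exact hF0 (Y ω))
            hfmeas.aestronglyMeasurable.restrict]
      congr 1
      have hmapYC : μ.map (fun ω => (Y ω, C ω)) = ν.prod κ :=
        (indepFun_iff_map_prod_eq_prod_map_map hY.aemeasurable hC.aemeasurable).mp hindep
      have e1 : ∫⁻ ω in (fun ω => (Y ω, C ω)) ⁻¹' S, ENNReal.ofReal (1/2 + F (C ω)/2) ∂μ
          = ∫⁻ p in S, ENNReal.ofReal (1/2 + F p.2/2) ∂(ν.prod κ) := by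
        have hmeas1 : Measurable fun p : ℝ × ℝ => ENNReal.ofReal (1/2 + F p.2/2) :=
          ENNReal.measurable_ofReal.comp (by fun_prop)
        rw [← hmapYC]
        exact (setLIntegral_map hS hmeas1 hYC).symm
      have e2 : ∫⁻ ω in (fun ω => (Y ω, C ω)) ⁻¹' S, ENNReal.ofReal (F (Y ω)) ∂μ
          = ∫⁻ p in S, ENNReal.ofReal (F p.1) ∂(ν.prod κ) := by
        have hmeas2 : Measurable fun p : ℝ × ℝ => ENNReal.ofReal (F p.1) :=
          ENNReal.measurable_ofReal.comp (hFc.measurable.comp measurable_fst)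
        rw [← hmapYC]
        exact (setLIntegral_map hS hmeas2 hYC).symm
      rw [e1, e2]
      exact aux_prod ν κ F hFν hatom hFc hF0 hF1 Bset hBset
  · -- AEStronglyMeasurable'
    have hφ : Measurable (fun p : ℝ × ℝ => (1 - p.2)/2 + (1 + p.2) * F p.1 / 2) := by
      fun_prop
    have : @Measurable Ω (ℝ × ℝ) (MeasurableSpace.comap pair inferInstance) _ pair :=
      Measurable.of_comap_le le_rfl
    have hgm2 : @Measurable Ω ℝ (MeasurableSpace.comap pair inferInstance) _ g := hφ.comp this
    exact hgm2.stronglyMeasurable.aestronglyMeasurable
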